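/- Fix integers i₀ and i₃ with 1 ≤ i₀ and i₀ + 80 ≤ i₃, and define T : ℕ → ℕ by T(x) = max(1, ⌈(80·x − i₃)/79⌉), where the ceiling is taken of the rational number (80·x − i₃)/79 (which may be negative) and the result is clamped below by 1. Then for every natural number m with (m : ℝ) ≥ Real.logb (80/79) ((i₃ − 80 : ℝ)/(i₃ − i₀ − 79 : ℝ)), the m-fold iterate satisfies T^[m] (i₀) = 1. -/
import Mathlib


/-- The color-shrinking map `T(x) = max(1, ⌈(80x − i₃)/79⌉)`. -/
def colorShrink (i₃ : ℕ) (x : ℕ) : ℕ :=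
  max 1 (⌈(80 * (x : ℚ) - (i₃ : ℚ)) / 79⌉.toNat)

lemma colorShrink_cast_le (i₃ y : ℕ) :
    (colorShrink i₃ y : ℝ) ≤ max 1 ((80 * (y : ℝ) - (i₃ : ℝ)) / 79 + 1) := by
  unfold colorShrink
  set q : ℚ := (80 * (y : ℚ) - (i₃ : ℚ)) / 79 with hq
  push_cast [Nat.cast_max]
  rcases le_or_gt ⌈q⌉ 0 with h | h
  · rw [Int.toNat_of_nonpos h]
    simp
  · have e : ((⌈q⌉.toNat : ℕ) : ℝ) = ((⌈q⌉ : ℤ) : ℝ) := by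
      exact_mod_cast congrArg (Int.cast : ℤ → ℝ) (Int.toNat_of_nonneg h.le)
    rw [e]
    have h1 : (⌈q⌉ : ℚ) ≤ q + 1 := le_of_lt (Int.ceil_lt_add_one q)
    have h2 : ((⌈q⌉ : ℚ) : ℝ) ≤ ((q : ℚ) : ℝ) + 1 := by exact_mod_cast h1
    have h3 : ((q : ℚ) : ℝ) = (80 * (y : ℝ) - (i₃ : ℝ)) / 79 := by
      rw [hq]; push_cast; ring
    rw [h3] at h2
    exact le_trans (max_le (le_max_left _ _) (le_trans h2 (le_max_right _ _)))
      le_rfl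

lemma colorShrink_of_le_one (i₃ y : ℕ) (hi : 81 ≤ i₃) (hy : y ≤ 1) :
    colorShrink i₃ y = 1 := by
  unfold colorShrink
  have hq : (80 * (y : ℚ) - (i₃ : ℚ)) / 79 ≤ 0 := by
    apply div_nonpos_of_nonpos_of_nonneg _ (by norm_num)
    have : (y : ℚ) ≤ 1 := by exact_mod_cast hy
    have : (81 : ℚ) ≤ (i₃ : ℚ) := by exact_mod_cast hi
    linarith
  have h0 : ⌈(80 * (y : ℚ) - (i₃ : ℚ)) / 79⌉ ≤ 0 := by
    rw [Int.ceil_le]; exact_mod_cast hq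
  rw [Int.toNat_of_nonpos h0]; rfl

lemma one_le_colorShrink_iterate (i₀ i₃ : ℕ) (h₀ : 1 ≤ i₀) (m : ℕ) :
    1 ≤ (colorShrink i₃)^[m] i₀ := by
  induction m with
  | zero => simpa using h₀
  | succ n ih =>
    rw [Function.iterate_succ_apply']
    exact le_max_left _ _

/-- After `m ≥ log_{80/79}((i₃ − 80)/(i₃ − i₀ − 79))` iterations, the color-shrinking map
sends `i₀` to `1`. -/
theorem colorShrink_iterate_eq_one (i₀ i₃ : ℕ) (h₀ : 1 ≤ i₀) (h₃ : i₀ + 80 ≤ i₃)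
    (m : ℕ)
    (hm : (m : ℝ) ≥ Real.logb (80 / 79) (((i₃ : ℝ) - 80) / ((i₃ : ℝ) - (i₀ : ℝ) - 79))) :
    (colorShrink i₃)^[m] i₀ = 1 := by
  have hi3 : 81 ≤ i₃ := by omega
  have hi3R : (81 : ℝ) ≤ (i₃ : ℝ) := by exact_mod_cast hi3
  have h₀R : (1 : ℝ) ≤ (i₀ : ℝ) := by exact_mod_cast h₀
  have h₃R : (i₀ : ℝ) + 80 ≤ (i₃ : ℝ) := by exact_mod_cast h₃
  set a : ℝ := (i₀ : ℝ) + 79 - (i₃ : ℝ) with ha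
  set c : ℝ := (i₃ : ℝ) - 79 with hc
  -- Key bound by the affine iterate
  have key : ∀ n : ℕ, ((colorShrink i₃)^[n] i₀ : ℝ) ≤ max 1 (a * (80 / 79) ^ n + c) := by
    intro n
    induction n with
    | zero =>
      simp only [Function.iterate_zero, id_eq, pow_zero, mul_one]
      have : (i₀ : ℝ) = a + c := by rw [ha, hc]; ring
      rw [this]
      exact le_max_right _ _
    | succ n ih =>
      rw [Function.iterate_succ_apply']
      set y : ℕ := (colorShrink i₃)^[n] i₀ with hy
      rcases le_max_iff.mp ih with h | h
      · have hy1 : y ≤ 1 := by exact_mod_cast h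
        rw [colorShrink_of_le_one i₃ y hi3 hy1]
        simp
      · refine le_trans (colorShrink_cast_le i₃ y) (max_le (le_max_left _ _) ?_)
        refine le_trans ?_ (le_max_right _ _)
        have hpow : (80 / 79 : ℝ) ^ (n + 1) = (80 / 79 : ℝ) ^ n * (80 / 79) := pow_succ _ _
        rw [hpow]
        have := h
        rw [hc] at this ⊢
        linarith
  -- From hm, deduce a * (80/79)^m + c ≤ 1
  have hd : (0 : ℝ) < (i₃ : ℝ) - (i₀ : ℝ) - 79 := by linarith
  have hnum : (0 : ℝ) < (i₃ : ℝ) - 80 := by linarith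
  have hb : (1 : ℝ) < 80 / 79 := by norm_num
  have hr : ((i₃ : ℝ) - 80) / ((i₃ : ℝ) - (i₀ : ℝ) - 79) ≤ (80 / 79 : ℝ) ^ (m : ℝ) :=
    (Real.logb_le_iff_le_rpow hb (div_pos hnum hd)).mp hm
  rw [Real.rpow_natCast] at hr
  have hr' : (i₃ : ℝ) - 80 ≤ ((i₃ : ℝ) - (i₀ : ℝ) - 79) * (80 / 79 : ℝ) ^ m := by
    have := (div_le_iff₀ hd).mp hr; linarith
  have hle1 : a * (80 / 79 : ℝ) ^ m + c ≤ 1 := by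
    rw [ha, hc]; nlinarith
  have hfin : ((colorShrink i₃)^[m] i₀ : ℝ) ≤ 1 := by
    refine le_trans (key m) (max_le le_rfl hle1)
  have h1 : (colorShrink i₃)^[m] i₀ ≤ 1 := by exact_mod_cast hfin
  have h2 := one_le_colorShrink_iterate i₀ i₃ h₀ m
  omega
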